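/- Let m ≥ 1 and let q = (q_1, ..., q_m) be a probability distribution sorted in non-increasing order, together with indices 0 ≤ k* ≤ j* ≤ m, k* < m, such that: q_j > 2/m for j = 1,...,k*; q_j ∈ (3/(2m), 2/m] for j = k*+1,...,j*; and q_j ≤ 3/(2m) for j = j*+1,...,m. Let A_1 = Σ_{s=k*+1}^{j*} q_s, A_2 = Σ_{s=j*+1}^{m} q_s, A = A_1 + A_2, and assume A_2 ≥ A/2. Let q̃ = (q_1, ..., q_{k*}, A/(m−k*), ..., A/(m−k*)) be the probability distribution whose last m−k* components all equal A/(m−k*). Then H(q) ≥ H(q̃) − √3/(e·ln 2), where H denotes Shannon entropy in bits. -/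

import Mathlib

/-- Shannon entropy in bits of a finite vector. -/
noncomputable def shannonH {m : ℕ} (w : Fin m → ℝ) : ℝ :=
  -∑ j, w j * Real.logb 2 (w j)

set_option maxHeartbeats 1000000 in
/-- Refined version of the flattening lemma: with components in
`(3/(2m), 2/m]` between `k*` and `j*`, components `≤ 3/(2m)` beyond `j*`, and
`A₂ ≥ A/2`, the entropy loss with respect to `q̃` is at most `√3/(e ln 2)`. -/
theorem greedy2_entropy_q_vs_qtilde
    (m : ℕ) (hm : 1 ≤ m) (q : Fin m → ℝ)
    (hqnn : ∀ j, 0 ≤ q j) (hqsum : ∑ j, q j = 1) (hqsort : Antitone q)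
    (kstar jstar : ℕ) (hkj : kstar ≤ jstar) (hjm : jstar ≤ m) (hk : kstar < m)
    (hbig : ∀ j : Fin m, j.val < kstar → 2 / (m : ℝ) < q j)
    (hmid : ∀ j : Fin m, kstar ≤ j.val → j.val < jstar →
      3 / (2 * (m : ℝ)) < q j ∧ q j ≤ 2 / (m : ℝ))
    (hsmall : ∀ j : Fin m, jstar ≤ j.val → q j ≤ 3 / (2 * (m : ℝ)))
    (A1 A2 A : ℝ)
    (hA1 : A1 = ∑ j ∈ Finset.univ.filter
      (fun j : Fin m => kstar ≤ j.val ∧ j.val < jstar), q j)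
    (hA2 : A2 = ∑ j ∈ Finset.univ.filter (fun j : Fin m => jstar ≤ j.val), q j)
    (hAsum : A = A1 + A2) (hA2half : A2 ≥ A / 2)
    (qt : Fin m → ℝ)
    (hqt : ∀ j : Fin m,
      qt j = if j.val < kstar then q j else A / ((m : ℝ) - (kstar : ℝ))) :
    shannonH q ≥ shannonH qt - Real.sqrt 3 / (Real.exp 1 * Real.log 2) := by
  classical
  have hlog2 : (0:ℝ) < Real.log 2 := Real.log_pos (by norm_num)
  have hm0 : (0:ℝ) < m := by exact_mod_cast hm
  have hcpos : 0 < Real.sqrt 3 / (Real.exp 1 * Real.log 2) :=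
    div_pos (Real.sqrt_pos.mpr (by norm_num)) (mul_pos (Real.exp_pos 1) hlog2)
  set T : Finset (Fin m) := Finset.univ.filter (fun j => kstar ≤ j.val) with hTdef
  set M : Finset (Fin m) :=
    Finset.univ.filter (fun j => kstar ≤ j.val ∧ j.val < jstar) with hMdef
  set S : Finset (Fin m) := Finset.univ.filter (fun j => jstar ≤ j.val) with hSdef
  -- split any full sum into head + tail
  have hsplit : ∀ f : Fin m → ℝ,
      ∑ j, f j = ∑ j ∈ Finset.univ.filter (fun j : Fin m => j.val < kstar), f j
        + ∑ j ∈ T, f j := by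
    intro f
    rw [hTdef, show (Finset.univ.filter (fun j : Fin m => kstar ≤ j.val))
        = (Finset.univ.filter (fun j : Fin m => ¬ j.val < kstar)) from by
      apply Finset.filter_congr; intro j _; simp [Nat.not_lt],
      Finset.sum_filter_add_sum_filter_not]
  -- split tail sum into mid + small
  have hMT : T.filter (fun j => j.val < jstar) = M := by
    ext j; simp [hTdef, hMdef]
  have hST : T.filter (fun j => ¬ j.val < jstar) = S := by
    ext j; simp [hTdef, hSdef]; omega
  have hTsplit : ∀ f : Fin m → ℝ, ∑ j ∈ T, f j = ∑ j ∈ M, f j + ∑ j ∈ S, f j := by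
    intro f
    rw [← Finset.sum_filter_add_sum_filter_not T (fun j : Fin m => j.val < jstar) f,
      hMT, hST]
  have hAT : A = ∑ j ∈ T, q j := by rw [hAsum, hA1, hA2, hTsplit q]
  have hcard : T.card = m - kstar := by
    have hmap : T.map Fin.valEmbedding = Finset.Ico kstar m := by
      ext a; simp [hTdef, Fin.exists_iff]
    have := congrArg Finset.card hmap
    simpa using this
  set nR : ℝ := (m : ℝ) - (kstar : ℝ) with hnRdef
  have hnR : 0 < nR := by
    have : (kstar : ℝ) < m := by exact_mod_cast hk
    rw [hnRdef]; linarith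
  set u : ℝ := A / nR with hudef
  have hqtT : ∀ j ∈ T, qt j = u := by
    intro j hj
    rw [hqt j, if_neg]
    simp only [hTdef, Finset.mem_filter] at hj
    omega
  have hqtH : ∀ j ∈ Finset.univ.filter (fun j : Fin m => j.val < kstar), qt j = q j := by
    intro j hj
    simp only [Finset.mem_filter] at hj
    rw [hqt j, if_pos hj.2]
  have hTconst : ∑ j ∈ T, qt j * Real.logb 2 (qt j) = nR * (u * Real.logb 2 u) := by
    rw [Finset.sum_congr rfl (fun j hj => by rw [hqtT j hj]), Finset.sum_const,
      nsmul_eq_mul, hcard]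
    congr 1
    rw [hnRdef]
    push_cast [Nat.cast_sub hk.le]
    ring
  have hANN : 0 ≤ A := by
    rw [hAT]; exact Finset.sum_nonneg fun j _ => hqnn j
  rcases eq_or_lt_of_le hANN with hA0 | hApos
  · -- A = 0 : q and qt agree termwise in entropy
    have hsum0 : ∑ j ∈ T, q j = 0 := by rw [← hAT]; exact hA0.symm
    have hq0 : ∀ j ∈ T, q j = 0 :=
      fun j hj => (Finset.sum_eq_zero_iff_of_nonneg (fun j _ => hqnn j)).1 hsum0 j hj
    have heq : shannonH qt = shannonH q := by
      unfold shannonH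
      congr 1
      rw [hsplit (fun j => qt j * Real.logb 2 (qt j)),
        hsplit (fun j => q j * Real.logb 2 (q j))]
      congr 1
      · exact Finset.sum_congr rfl fun j hj => by rw [hqtH j hj]
      · apply Finset.sum_congr rfl
        intro j hj
        rw [hqtT j hj, hq0 j hj, hudef, ← hA0]
        simp
    rw [heq]
    linarith
  -- main case A > 0
  have hu : 0 < u := div_pos hApos hnR
  have hnRu : nR * u = A := by
    rw [hudef]; field_simp
  have hA1nn : 0 ≤ A1 := by
    rw [hA1]; exact Finset.sum_nonneg fun j _ => hqnn j
  have hA2nn : 0 ≤ A2 := by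
    rw [hA2]; exact Finset.sum_nonneg fun j _ => hqnn j
  -- the key estimate (in nats)
  have key : (∑ j ∈ T, q j * Real.log (q j)) - A * Real.log u
      ≤ Real.sqrt 3 / Real.exp 1 := by
    have hmid' : ∑ j ∈ M, q j * Real.log (q j) ≤ A1 * Real.log (2 / m) := by
      rw [hA1, Finset.sum_mul]
      apply Finset.sum_le_sum
      intro j hj
      simp only [hMdef, Finset.mem_filter] at hj
      have h1 := hmid j hj.2.1 hj.2.2
      have hpos : 0 < q j := lt_trans (by positivity) h1.1
      exact mul_le_mul_of_nonneg_left (Real.log_le_log hpos h1.2) (hqnn j)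
    have hsml' : ∑ j ∈ S, q j * Real.log (q j) ≤ A2 * Real.log (3 / (2 * m)) := by
      rw [hA2, Finset.sum_mul]
      apply Finset.sum_le_sum
      intro j hj
      simp only [hSdef, Finset.mem_filter] at hj
      rcases eq_or_lt_of_le (hqnn j) with h0 | hpos
      · rw [← h0]; simp
      · exact mul_le_mul_of_nonneg_left (Real.log_le_log hpos (hsmall j hj.2)) (hqnn j)
    have hlogu : A * Real.log (A / m) ≤ A * Real.log u := by
      apply mul_le_mul_of_nonneg_left _ hANN
      apply Real.log_le_log (div_pos hApos hm0)
      rw [hudef]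
      have hle : nR ≤ (m:ℝ) := by
        rw [hnRdef]
        have : (0:ℝ) ≤ kstar := Nat.cast_nonneg _
        linarith
      exact div_le_div_of_nonneg_left hANN hnR hle
    have step1 : (∑ j ∈ T, q j * Real.log (q j)) - A * Real.log u
        ≤ A1 * Real.log (2 / m) + A2 * Real.log (3 / (2 * m)) - A * Real.log (A / m) := by
      rw [hTsplit (fun j => q j * Real.log (q j))]
      linarith
    have hlog1 : Real.log (2 / (m:ℝ)) = Real.log 2 - Real.log m :=
      Real.log_div (by norm_num) (ne_of_gt hm0)
    have hlog2' : Real.log (3 / (2 * (m:ℝ))) = Real.log 3 - Real.log 2 - Real.log m := by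
      rw [Real.log_div (by norm_num) (by positivity),
        Real.log_mul (by norm_num) (ne_of_gt hm0)]
      ring
    have hlog3 : Real.log (A / m) = Real.log A - Real.log m :=
      Real.log_div (ne_of_gt hApos) (ne_of_gt hm0)
    have step2 : A1 * Real.log (2 / (m:ℝ)) + A2 * Real.log (3 / (2 * (m:ℝ)))
        - A * Real.log (A / m)
        ≤ A * (Real.log (Real.sqrt 3) - Real.log A) := by
      rw [hlog1, hlog2', hlog3, Real.log_sqrt (by norm_num), hAsum]
      have h34 : 0 ≤ 2 * Real.log 2 - Real.log 3 := by
        have h3 : Real.log 3 < Real.log 4 := Real.log_lt_log (by norm_num) (by norm_num)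
        have h4 : Real.log 4 = 2 * Real.log 2 := by
          rw [show (4:ℝ) = 2 ^ 2 by norm_num, Real.log_pow]; push_cast; ring
        linarith
      have hd : (0:ℝ) ≤ A2 - A1 := by linarith
      nlinarith [mul_nonneg hd h34]
    have step3 : A * (Real.log (Real.sqrt 3) - Real.log A) ≤ Real.sqrt 3 / Real.exp 1 := by
      have hx : 0 < Real.sqrt 3 / (Real.exp 1 * A) :=
        div_pos (Real.sqrt_pos.mpr (by norm_num)) (mul_pos (Real.exp_pos 1) hApos)
      have h1 : Real.log (Real.sqrt 3 / (Real.exp 1 * A))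
          ≤ Real.sqrt 3 / (Real.exp 1 * A) - 1 := Real.log_le_sub_one_of_pos hx
      have h2 : Real.log (Real.sqrt 3 / (Real.exp 1 * A))
          = Real.log (Real.sqrt 3) - 1 - Real.log A := by
        rw [Real.log_div (by positivity) (ne_of_gt (mul_pos (Real.exp_pos 1) hApos)),
          Real.log_mul (ne_of_gt (Real.exp_pos 1)) (ne_of_gt hApos), Real.log_exp]
        ring
      have h3 : A * (Real.sqrt 3 / (Real.exp 1 * A)) = Real.sqrt 3 / Real.exp 1 := by
        field_simp
      nlinarith [h1, h2, h3, hApos]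
    linarith
  -- conclude
  have hrw : ∑ j ∈ T, q j * Real.logb 2 (q j)
      = (∑ j ∈ T, q j * Real.log (q j)) / Real.log 2 := by
    rw [Finset.sum_div]
    apply Finset.sum_congr rfl
    intro j _
    rw [Real.logb, mul_div_assoc]
  have hrwu : nR * (u * Real.logb 2 u) = (A * Real.log u) / Real.log 2 := by
    rw [Real.logb, ← hnRu]; ring
  have final : (∑ j ∈ T, q j * Real.logb 2 (q j)) - nR * (u * Real.logb 2 u)
      ≤ Real.sqrt 3 / (Real.exp 1 * Real.log 2) := by
    rw [hrw, hrwu, div_sub_div_same,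
      show Real.sqrt 3 / (Real.exp 1 * Real.log 2)
        = (Real.sqrt 3 / Real.exp 1) / Real.log 2 from by rw [div_div]]
    exact div_le_div_of_nonneg_right key hlog2.le
  have hq' := hsplit (fun j => q j * Real.logb 2 (q j))
  have hqt' := hsplit (fun j => qt j * Real.logb 2 (qt j))
  have hhead : ∑ j ∈ Finset.univ.filter (fun j : Fin m => j.val < kstar),
      qt j * Real.logb 2 (qt j)
      = ∑ j ∈ Finset.univ.filter (fun j : Fin m => j.val < kstar),
        q j * Real.logb 2 (q j) :=
    Finset.sum_congr rfl fun j hj => by rw [hqtH j hj]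
  unfold shannonH
  rw [hq', hqt', hhead, hTconst]
  linarith
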